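/- Let V be a finite set with |V| = n and, for every t ∈ {1, …, n−1}, let x^t : V × V → {0,1} be feasible for the layer-t problem; let 𝒫_t denote the partition of V into equivalence classes of the relation i ∼ j iff x^t(i,j) = 0 (each class has size at most t). Then the family (x^t)_{t=1}^{n−1} is feasible for ILP-ultrametric if and only if both of the following hold: (Nested cliques) for all s ≤ t, every class of 𝒫_s is contained in some class of 𝒫_t; and (Realization) for every t and every class P of 𝒫_t with |P| = s ≤ t, P is itself a class of 𝒫_s. -/

import Mathlib

open scoped Classical

/-- `x : V × V → {0,1}` is feasible for the layer-`t` problem. -/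
def LayerFeasible {V : Type*} [Fintype V] [DecidableEq V] (t : ℕ) (x : V → V → ℝ) : Prop :=
  (∀ i j : V, x i j = x j i) ∧ (∀ i : V, x i i = 0) ∧
  (∀ i j k : V, x i k ≤ x i j + x j k) ∧
  (∀ S : Finset V, S.card = t + 1 → (2 : ℝ) ≤ ∑ i ∈ S, ∑ j ∈ S, x i j)

/-- For a family `(x^t)_{t=1}^{n-1}` of 0/1 solutions, each feasible for the layer-`t`
problem, with `𝒫_t` the partition of `V` into classes of `i ∼ j ↔ x^t i j = 0` (the class
of `i` being `{j : x^t i j = 0}`): the family satisfies the remaining constraints of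
ILP-ultrametric (the layer constraints `x^t ≥ x^{t+1}` and the hereditary constraints)
if and only if (Nested cliques) for `s ≤ t` every class of `𝒫_s` is contained in the
corresponding class of `𝒫_t`, and (Realization) every class `P` of `𝒫_t` with `|P| = s`
is itself a class of `𝒫_s`. -/
theorem statement6 {V : Type*} [Fintype V] [DecidableEq V] (n : ℕ)
    (hn : Fintype.card V = n) (hn2 : 2 ≤ n)
    (x : ℕ → V → V → ℝ)
    (hbin : ∀ t ∈ Finset.Icc 1 (n - 1), ∀ i j : V, x t i j = 0 ∨ x t i j = 1)
    (hfeas : ∀ t ∈ Finset.Icc 1 (n - 1), LayerFeasible t (x t)) :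
    ((∀ t ∈ Finset.Icc 1 (n - 2), ∀ i j : V, x (t + 1) i j ≤ x t i j) ∧
     (∀ t ∈ Finset.Icc 1 (n - 1), ∀ S : Finset V, S.card ≤ n - 1 →
       ∑ i ∈ S, ∑ j ∈ S, x S.card i j ≤
         (S.card : ℝ) * ((∑ i ∈ S, ∑ j ∈ S, x t i j) +
           ∑ i ∈ S, ∑ j ∈ Sᶜ, (1 - x t i j))))
    ↔
    ((∀ s ∈ Finset.Icc 1 (n - 1), ∀ t ∈ Finset.Icc 1 (n - 1), s ≤ t →
        ∀ i : V, (Finset.univ.filter fun j : V => x s i j = 0) ⊆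
          (Finset.univ.filter fun j : V => x t i j = 0)) ∧
     (∀ t ∈ Finset.Icc 1 (n - 1), ∀ i : V,
        (Finset.univ.filter fun j : V =>
            x ((Finset.univ.filter fun j : V => x t i j = 0).card) i j = 0) =
          (Finset.univ.filter fun j : V => x t i j = 0))) := by
  -- basic facts
  have hnn : ∀ t ∈ Finset.Icc 1 (n - 1), ∀ i j : V, 0 ≤ x t i j := by
    intro t ht i j
    rcases hbin t ht i j with h | h <;> rw [h] <;> norm_num
  have hle1 : ∀ t ∈ Finset.Icc 1 (n - 1), ∀ i j : V, x t i j ≤ 1 := by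
    intro t ht i j
    rcases hbin t ht i j with h | h <;> rw [h] <;> norm_num
  -- transitivity centered at i : x t i j = 0, x t i k = 0 → x t j k = 0
  have htrans : ∀ t ∈ Finset.Icc 1 (n - 1), ∀ i j k : V,
      x t i j = 0 → x t i k = 0 → x t j k = 0 := by
    intro t ht i j k h1 h2
    obtain ⟨hsym, _, htri, _⟩ := hfeas t ht
    have := htri j i k
    rw [hsym j i, h1, h2] at this
    have := hnn t ht j k
    linarith
  -- class of i at layer t has at most t elements
  have hcard : ∀ t ∈ Finset.Icc 1 (n - 1), ∀ i : V,
      (Finset.univ.filter fun j : V => x t i j = 0).card ≤ t := by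
    intro t ht i
    by_contra hcon
    push_neg at hcon
    obtain ⟨T, hT, hTcard⟩ :=
      Finset.exists_subset_card_eq (s := Finset.univ.filter fun j : V => x t i j = 0) (n := t + 1)
        (by omega)
    have h2 := (hfeas t ht).2.2.2 T hTcard
    have hz : ∑ a ∈ T, ∑ b ∈ T, x t a b = 0 := by
      apply Finset.sum_eq_zero
      intro a ha
      apply Finset.sum_eq_zero
      intro b hb
      have ha' := (Finset.mem_filter.mp (hT ha)).2
      have hb' := (Finset.mem_filter.mp (hT hb)).2
      exact htrans t ht i a b ha' hb'
    rw [hz] at h2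
    norm_num at h2
  have hi_self : ∀ t ∈ Finset.Icc 1 (n - 1), ∀ i : V,
      i ∈ Finset.univ.filter fun j : V => x t i j = 0 := by
    intro t ht i
    simp [Finset.mem_filter, (hfeas t ht).2.1 i]
  constructor
  · rintro ⟨hlay, hher⟩
    -- monotonicity of x along layers
    have hmono : ∀ s, 1 ≤ s → ∀ t, t ≤ n - 1 → s ≤ t → ∀ i j : V, x t i j ≤ x s i j := by
      intro s hs1 t
      induction t with
      | zero => intro _ hst i j; exact absurd (hs1.trans hst) (by norm_num)
      | succ t ih =>
        intro ht hst i j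
        rcases eq_or_lt_of_le hst with h | h
        · rw [h]
        · have hst' : s ≤ t := by omega
          have h1 : x (t + 1) i j ≤ x t i j :=
            hlay t (by simp [Finset.mem_Icc]; omega) i j
          exact h1.trans (ih (by omega) hst' i j)
    have hnest : ∀ s ∈ Finset.Icc 1 (n - 1), ∀ t ∈ Finset.Icc 1 (n - 1), s ≤ t →
        ∀ i : V, (Finset.univ.filter fun j : V => x s i j = 0) ⊆
          (Finset.univ.filter fun j : V => x t i j = 0) := by
      intro s hs t ht hst i j hj
      simp only [Finset.mem_filter, Finset.mem_univ, true_and] at hj ⊢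
      have h1 := hmono s (by simp [Finset.mem_Icc] at hs; omega) t
        (by simp [Finset.mem_Icc] at ht; omega) hst i j
      have h2 := hnn t ht i j
      linarith [hj ▸ h1]
    refine ⟨hnest, ?_⟩
    intro t ht i
    set P := Finset.univ.filter fun j : V => x t i j = 0 with hP
    have hst : P.card ≤ t := hcard t ht i
    have hs1 : 1 ≤ P.card := Finset.card_pos.mpr ⟨i, hi_self t ht i⟩
    have htIcc := Finset.mem_Icc.mp ht
    have hsIcc : P.card ∈ Finset.Icc 1 (n - 1) := Finset.mem_Icc.mpr ⟨hs1, by omega⟩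
    apply Finset.Subset.antisymm
    · exact hnest P.card hsIcc t ht (by omega) i
    · -- use the hereditary constraint with S = P
      have hher' := hher t ht P (by omega)
      have hA : (∑ a ∈ P, ∑ b ∈ P, x t a b) = 0 := by
        apply Finset.sum_eq_zero
        intro a ha
        apply Finset.sum_eq_zero
        intro b hb
        exact htrans t ht i a b (Finset.mem_filter.mp ha).2 (Finset.mem_filter.mp hb).2
      have hB : (∑ a ∈ P, ∑ b ∈ Pᶜ, (1 - x t a b)) = 0 := by
        apply Finset.sum_eq_zero
        intro a ha
        apply Finset.sum_eq_zero
        intro b hb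
        have hb' : x t i b ≠ 0 := by
          intro h0
          exact (Finset.mem_compl.mp hb) (by simp [hP, h0])
        have hb1 : x t i b = 1 := (hbin t ht i b).resolve_left hb'
        have ha' := (Finset.mem_filter.mp ha).2
        -- x t a b = 1 : otherwise transitivity forces x t i b = 0
        rcases hbin t ht a b with h0 | h1
        · exfalso
          have := htrans t ht a i b
            (by rw [(hfeas t ht).1 a i]; exact ha') h0
          exact hb' this
        · rw [h1]; ring
      rw [hA, hB] at hher'
      norm_num at hher'
      -- all entries of x P.card on P × P vanish
      have hz : ∀ a ∈ P, ∀ b ∈ P, x P.card a b = 0 := by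
        have hnn' : ∀ a ∈ P, 0 ≤ ∑ b ∈ P, x P.card a b := by
          intro a _
          exact Finset.sum_nonneg fun b _ => hnn P.card hsIcc a b
        have houter := (Finset.sum_eq_zero_iff_of_nonneg hnn').mp
          (le_antisymm hher' (Finset.sum_nonneg hnn'))
        intro a ha b hb
        have hinner := (Finset.sum_eq_zero_iff_of_nonneg
          (fun b _ => hnn P.card hsIcc a b)).mp (houter a ha)
        exact hinner b hb
      intro j hj
      simp only [Finset.mem_filter, Finset.mem_univ, true_and]
      exact hz i (hi_self t ht i) j hj
  · rintro ⟨hnest, hreal⟩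
    constructor
    · -- layer constraints from nesting
      intro t ht i j
      have htIcc := Finset.mem_Icc.mp ht
      have ht1 : t ∈ Finset.Icc 1 (n - 1) := Finset.mem_Icc.mpr ⟨by omega, by omega⟩
      have ht2 : t + 1 ∈ Finset.Icc 1 (n - 1) := Finset.mem_Icc.mpr ⟨by omega, by omega⟩
      rcases hbin t ht1 i j with h0 | h1
      · have : j ∈ Finset.univ.filter fun j : V => x t i j = 0 := by simp [h0]
        have := hnest t ht1 (t + 1) ht2 (by omega) i this
        simp only [Finset.mem_filter, Finset.mem_univ, true_and] at this
        rw [this, h0]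
      · rw [h1]; exact hle1 (t + 1) ht2 i j
    · -- hereditary constraints
      intro t ht S hS
      rcases S.eq_empty_or_nonempty with rfl | ⟨i₀, hi₀⟩
      · simp
      have hm1 : 1 ≤ S.card := Finset.card_pos.mpr ⟨i₀, hi₀⟩
      have hmIcc : S.card ∈ Finset.Icc 1 (n - 1) := Finset.mem_Icc.mpr ⟨hm1, hS⟩
      have hA0 : 0 ≤ ∑ a ∈ S, ∑ b ∈ S, x t a b :=
        Finset.sum_nonneg fun a _ => Finset.sum_nonneg fun b _ => hnn t ht a b
      have hB0 : 0 ≤ ∑ a ∈ S, ∑ b ∈ Sᶜ, (1 - x t a b) :=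
        Finset.sum_nonneg fun a _ => Finset.sum_nonneg fun b _ => by
          have := hle1 t ht a b; linarith
      have hLHS : ∑ a ∈ S, ∑ b ∈ S, x S.card a b ≤ (S.card : ℝ) * S.card := by
        calc ∑ a ∈ S, ∑ b ∈ S, x S.card a b
            ≤ ∑ a ∈ S, ∑ b ∈ S, (1 : ℝ) :=
              Finset.sum_le_sum fun a _ => Finset.sum_le_sum fun b _ =>
                hle1 S.card hmIcc a b
          _ = (S.card : ℝ) * S.card := by simp [mul_comm]
      -- helper: if A + B ≥ card then done
      have hbig : (S.card : ℝ) ≤ (∑ a ∈ S, ∑ b ∈ S, x t a b) +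
          ∑ a ∈ S, ∑ b ∈ Sᶜ, (1 - x t a b) →
          ∑ a ∈ S, ∑ b ∈ S, x S.card a b ≤
            (S.card : ℝ) * ((∑ a ∈ S, ∑ b ∈ S, x t a b) +
              ∑ a ∈ S, ∑ b ∈ Sᶜ, (1 - x t a b)) := by
        intro h
        calc ∑ a ∈ S, ∑ b ∈ S, x S.card a b ≤ (S.card : ℝ) * S.card := hLHS
          _ ≤ (S.card : ℝ) * _ := by
              apply mul_le_mul_of_nonneg_left h (by positivity)
      by_cases hSC : ∀ a ∈ S, x t i₀ a = 0
      · by_cases hCS : ∀ b : V, x t i₀ b = 0 → b ∈ S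
        · -- S is exactly the class of i₀ at layer t
          have hSeq : S = Finset.univ.filter fun j : V => x t i₀ j = 0 := by
            apply Finset.Subset.antisymm
            · intro a ha; simp [hSC a ha]
            · intro b hb
              simp only [Finset.mem_filter, Finset.mem_univ, true_and] at hb
              exact hCS b hb
          have hreal' := hreal t ht i₀
          rw [← hSeq] at hreal'
          -- LHS = 0
          have hL0 : ∑ a ∈ S, ∑ b ∈ S, x S.card a b = 0 := by
            apply Finset.sum_eq_zero
            intro a ha
            apply Finset.sum_eq_zero
            intro b hb
            have ha' : x S.card i₀ a = 0 := by
              have : a ∈ Finset.univ.filter fun j : V => x S.card i₀ j = 0 := by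
                rw [hreal']; exact ha
              exact (Finset.mem_filter.mp this).2
            have hb' : x S.card i₀ b = 0 := by
              have : b ∈ Finset.univ.filter fun j : V => x S.card i₀ j = 0 := by
                rw [hreal']; exact hb
              exact (Finset.mem_filter.mp this).2
            exact htrans S.card hmIcc i₀ a b ha' hb'
          rw [hL0]
          positivity
        · -- some b in the class of i₀ lies outside S : B ≥ card S
          push_neg at hCS
          obtain ⟨b₀, hb₀0, hb₀S⟩ := hCS
          apply hbig
          have hBge : (S.card : ℝ) ≤ ∑ a ∈ S, ∑ b ∈ Sᶜ, (1 - x t a b) := by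
            have : ∀ a ∈ S, (1 : ℝ) ≤ ∑ b ∈ Sᶜ, (1 - x t a b) := by
              intro a ha
              have hab : x t a b₀ = 0 := by
                have h1 : x t i₀ a = 0 := hSC a ha
                have := htrans t ht i₀ a b₀ h1 hb₀0
                exact this
              calc (1 : ℝ) = 1 - x t a b₀ := by rw [hab]; ring
                _ ≤ ∑ b ∈ Sᶜ, (1 - x t a b) := by
                    apply Finset.single_le_sum (f := fun b => 1 - x t a b)
                      (fun b _ => by simpa using sub_nonneg.mpr (hle1 t ht a b))
                      (Finset.mem_compl.mpr hb₀S)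
            calc (S.card : ℝ) = ∑ _a ∈ S, (1 : ℝ) := by simp
              _ ≤ ∑ a ∈ S, ∑ b ∈ Sᶜ, (1 - x t a b) := Finset.sum_le_sum this
          linarith
      · -- some a₀ in S outside the class of i₀ : A ≥ card S
        push_neg at hSC
        obtain ⟨a₀, ha₀S, ha₀⟩ := hSC
        apply hbig
        have hAge : (S.card : ℝ) ≤ ∑ a ∈ S, ∑ b ∈ S, x t a b := by
          have key : ∀ a ∈ S, (1 : ℝ) ≤ ∑ b ∈ S, x t a b := by
            intro a ha
            rcases hbin t ht i₀ a with h0 | h1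
            · -- a in class of i₀, so x t a a₀ = 1
              have hone : x t a a₀ = 1 := by
                rcases hbin t ht a a₀ with hz | ho
                · exfalso
                  have := htrans t ht a i₀ a₀
                    (by rw [(hfeas t ht).1 a i₀]; exact h0) hz
                  exact ha₀ this
                · exact ho
              calc (1 : ℝ) = x t a a₀ := hone.symm
                _ ≤ ∑ b ∈ S, x t a b :=
                    Finset.single_le_sum (fun b _ => hnn t ht a b) ha₀S
            · -- x t i₀ a = 1, pair a with i₀ ∈ S
              have hone : x t a i₀ = 1 := by rw [(hfeas t ht).1 a i₀]; exact h1
              calc (1 : ℝ) = x t a i₀ := hone.symm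
                _ ≤ ∑ b ∈ S, x t a b :=
                    Finset.single_le_sum (fun b _ => hnn t ht a b) hi₀
          calc (S.card : ℝ) = ∑ _a ∈ S, (1 : ℝ) := by simp
            _ ≤ ∑ a ∈ S, ∑ b ∈ S, x t a b := Finset.sum_le_sum key
        linarith
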